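/- Let p₁, p₂, …, pₙ be points in ℝ² with pᵢ ≠ pᵢ₊₁ for every i. The polygonal path on p₁, …, pₙ is self-approaching if and only if for every index i with 2 ≤ i ≤ n, the convex hull of the set {pᵢ, pᵢ₊₁, …, pₙ} is contained in the closed half-plane l⁺(p_{i−1}, p_i). -/

import Mathlib

/-- The point of the polygonal path `p 0, p 1, …` lying on segment `i`
(from `p i` to `p (i+1)`) at fraction `s ∈ [0,1]`. -/
noncomputable def polyPt (p : ℕ → EuclideanSpace ℝ (Fin 2)) (i : ℕ) (s : ℝ) :
    EuclideanSpace ℝ (Fin 2) :=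
  (1 - s) • p i + s • p (i + 1)

/-- `(i, s)` comes no later than `(j, t)` in the lexicographic order on parameters
of points of a polygonal path. -/
def ParamLE (i : ℕ) (s : ℝ) (j : ℕ) (t : ℝ) : Prop :=
  i < j ∨ (i = j ∧ s ≤ t)

/-- The polygonal path on the points `p 0, …, p m` (with `m` segments, indexed
`0, …, m-1`) is self-approaching: for any three of its points `a, b, c` in order
along the path, `dist a c ≥ dist b c`. -/
def IsSelfApproachingPoly (m : ℕ) (p : ℕ → EuclideanSpace ℝ (Fin 2)) : Prop :=
  ∀ (i j k : ℕ) (s t u : ℝ), i < m → j < m → k < m →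
    s ∈ Set.Icc (0 : ℝ) 1 → t ∈ Set.Icc (0 : ℝ) 1 → u ∈ Set.Icc (0 : ℝ) 1 →
    ParamLE i s j t → ParamLE j t k u →
    dist (polyPt p j t) (polyPt p k u) ≤ dist (polyPt p i s) (polyPt p k u)

/-- The polygonal path on the points `p 0, …, p m` has increasing chords: for any
four of its points `a, b, c, d` in order along the path, `dist a d ≥ dist b c`. -/
def IsIncreasingChordsPoly (m : ℕ) (p : ℕ → EuclideanSpace ℝ (Fin 2)) : Prop :=
  ∀ (i j k l : ℕ) (s t u v : ℝ), i < m → j < m → k < m → l < m →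
    s ∈ Set.Icc (0 : ℝ) 1 → t ∈ Set.Icc (0 : ℝ) 1 → u ∈ Set.Icc (0 : ℝ) 1 →
    v ∈ Set.Icc (0 : ℝ) 1 →
    ParamLE i s j t → ParamLE j t k u → ParamLE k u l v →
    dist (polyPt p j t) (polyPt p k u) ≤ dist (polyPt p i s) (polyPt p l v)

private lemma polyPt_zero' (p : ℕ → EuclideanSpace ℝ (Fin 2)) (j : ℕ) :
    polyPt p j 0 = p j := by simp [polyPt]

private lemma polyPt_one' (p : ℕ → EuclideanSpace ℝ (Fin 2)) (j : ℕ) :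
    polyPt p j 1 = p (j + 1) := by simp [polyPt]

/-- Key inner-product consequence of the half-plane condition: the vector from a
path point at `(j,t)` to any later path point `(k,u)` makes a nonnegative inner
product with the direction of segment `j`. -/
private lemma key_inner (m : ℕ) (p : ℕ → EuclideanSpace ℝ (Fin 2))
    (H : ∀ i : ℕ, 1 ≤ i → i ≤ m →
        convexHull ℝ (p '' {k | i ≤ k ∧ k ≤ m}) ⊆
          {x : EuclideanSpace ℝ (Fin 2) | 0 ≤ (inner ℝ (x - p i) (p i - p (i - 1)) : ℝ)})
    (j k : ℕ) (t u : ℝ) (hj : j < m) (hk : k < m)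
    (hu : u ∈ Set.Icc (0:ℝ) 1) (ht1 : t ≤ 1)
    (hle : ParamLE j t k u) :
    0 ≤ (inner ℝ (polyPt p k u - polyPt p j t) (p (j+1) - p j) : ℝ) := by
  rcases hle with hlt | ⟨rfl, htu⟩
  · have hmem : ∀ l, j + 1 ≤ l → l ≤ m →
        0 ≤ (inner ℝ (p l - p (j+1)) (p (j+1) - p j) : ℝ) := by
      intro l h1 h2
      have hj1 : (1:ℕ) ≤ j + 1 := by omega
      have hmm : j + 1 ≤ m := hj
      have := H (j+1) hj1 hmm (subset_convexHull ℝ _ ⟨l, ⟨h1, h2⟩, rfl⟩)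
      simpa using this
    have h1 := hmem k hlt (le_of_lt hk)
    have h2 := hmem (k+1) (by omega) hk
    have hsplit : polyPt p k u - polyPt p j t
        = (1-u) • (p k - p (j+1)) + u • (p (k+1) - p (j+1)) + (1-t) • (p (j+1) - p j) := by
      simp only [polyPt]; module
    rw [hsplit, inner_add_left, inner_add_left, real_inner_smul_left,
      real_inner_smul_left, real_inner_smul_left]
    have h3 : 0 ≤ (inner ℝ (p (j+1) - p j) (p (j+1) - p j) : ℝ) := real_inner_self_nonneg
    nlinarith [hu.1, hu.2]
  · have hsub : polyPt p j u - polyPt p j t = (u - t) • (p (j+1) - p j) := by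
      simp only [polyPt]; module
    rw [hsub, real_inner_smul_left]
    have h3 : 0 ≤ (inner ℝ (p (j+1) - p j) (p (j+1) - p j) : ℝ) := real_inner_self_nonneg
    nlinarith

/-- Monotonicity of the distance to a later point along one segment. -/
private lemma seg_mono (p : ℕ → EuclideanSpace ℝ (Fin 2)) (j : ℕ)
    (c : EuclideanSpace ℝ (Fin 2)) {t t' : ℝ} (htt : t ≤ t')
    (h1 : 0 ≤ (inner ℝ (c - polyPt p j t) (p (j+1) - p j) : ℝ))
    (h2 : 0 ≤ (inner ℝ (c - polyPt p j t') (p (j+1) - p j) : ℝ)) :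
    dist (polyPt p j t') c ≤ dist (polyPt p j t) c := by
  rw [dist_eq_norm, dist_eq_norm]
  set w : EuclideanSpace ℝ (Fin 2) := p (j+1) - p j with hw
  have hq : polyPt p j t' - c = (polyPt p j t - c) + (t' - t) • w := by
    simp only [polyPt, hw]; module
  have e1 : (inner ℝ (c - polyPt p j t) w : ℝ) = - inner ℝ (polyPt p j t - c) w := by
    rw [← inner_neg_left]; congr 1; abel
  have e2 : c - polyPt p j t' = (c - polyPt p j t) - (t' - t) • w := by
    simp only [polyPt, hw]; module
  rw [e2, inner_sub_left, real_inner_smul_left] at h2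
  rw [e1] at h1 h2
  have hsq : ‖polyPt p j t' - c‖^2 ≤ ‖polyPt p j t - c‖^2 := by
    rw [hq, norm_add_sq_real, real_inner_smul_right, norm_smul]
    have hn : (‖(t' - t : ℝ)‖ * ‖w‖)^2 = (t'-t)^2 * ‖w‖^2 := by
      rw [Real.norm_eq_abs]; rw [mul_pow, sq_abs]
    rw [hn]
    have hww : (inner ℝ w w : ℝ) = ‖w‖^2 := real_inner_self_eq_norm_sq w
    nlinarith [h1, h2, sub_nonneg.mpr htt]
  calc ‖polyPt p j t' - c‖ = Real.sqrt (‖polyPt p j t' - c‖^2) := by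
        rw [Real.sqrt_sq (norm_nonneg _)]
    _ ≤ Real.sqrt (‖polyPt p j t - c‖^2) := Real.sqrt_le_sqrt hsq
    _ = ‖polyPt p j t - c‖ := Real.sqrt_sq (norm_nonneg _)

/-- Distance to a fixed later path point is nonincreasing along the path. -/
private lemma chain (m : ℕ) (p : ℕ → EuclideanSpace ℝ (Fin 2))
    (H : ∀ i : ℕ, 1 ≤ i → i ≤ m →
        convexHull ℝ (p '' {k | i ≤ k ∧ k ≤ m}) ⊆
          {x : EuclideanSpace ℝ (Fin 2) | 0 ≤ (inner ℝ (x - p i) (p i - p (i - 1)) : ℝ)})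
    (k : ℕ) (u : ℝ) (hk : k < m) (hu : u ∈ Set.Icc (0:ℝ) 1) :
    ∀ j, j < m → ∀ i s t, i ≤ j → s ∈ Set.Icc (0:ℝ) 1 → t ∈ Set.Icc (0:ℝ) 1 →
      ParamLE i s j t → ParamLE j t k u →
      dist (polyPt p j t) (polyPt p k u) ≤ dist (polyPt p i s) (polyPt p k u) := by
  intro j
  induction j using Nat.strong_induction_on with
  | _ j IH =>
    intro hjm i s t hij hs ht h1 h2
    have hjt0 : ParamLE j 0 k u := by
      rcases h2 with h | ⟨rfl, htu⟩
      · exact Or.inl h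
      · exact Or.inr ⟨rfl, le_trans ht.1 htu⟩
    have hstep : dist (polyPt p j t) (polyPt p k u) ≤ dist (polyPt p j 0) (polyPt p k u) :=
      seg_mono p j _ ht.1
        (key_inner m p H j k 0 u hjm hk hu zero_le_one hjt0)
        (key_inner m p H j k t u hjm hk hu ht.2 h2)
    rcases h1 with hlt | ⟨rfl, hst⟩
    · -- i < j
      have hj1 : 1 ≤ j := by omega
      have heq : polyPt p j 0 = polyPt p (j-1) 1 := by
        have h : j - 1 + 1 = j := by omega
        rw [polyPt_zero', polyPt_one', h]
      have hP1 : ParamLE i s (j-1) 1 := by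
        rcases Nat.lt_or_ge i (j-1) with h | h
        · exact Or.inl h
        · exact Or.inr ⟨by omega, hs.2⟩
      have hP2 : ParamLE (j-1) 1 k u := by
        have : j ≤ k := by rcases h2 with h | ⟨h, _⟩ <;> omega
        exact Or.inl (by omega)
      have hrest := IH (j-1) (by omega) (by omega) i s 1 (by omega) hs
        ⟨zero_le_one, le_refl 1⟩ hP1 hP2
      calc dist (polyPt p j t) (polyPt p k u)
          ≤ dist (polyPt p j 0) (polyPt p k u) := hstep
        _ = dist (polyPt p (j-1) 1) (polyPt p k u) := by rw [heq]
        _ ≤ dist (polyPt p i s) (polyPt p k u) := hrest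
    · -- i = j, s ≤ t
      have hjs : ParamLE i s k u := by
        rcases h2 with h | ⟨rfl, htu⟩
        · exact Or.inl h
        · exact Or.inr ⟨rfl, le_trans hst htu⟩
      exact seg_mono p i _ hst
        (key_inner m p H i k s u hjm hk hu hs.2 hjs)
        (key_inner m p H i k t u hjm hk hu ht.2 h2)


/-- A polygonal path `p 0, …, p m` is self-approaching iff for every `1 ≤ i ≤ m`,
the convex hull of `{p i, p (i+1), …, p m}` is contained in the closed half-plane
`l⁺(p (i-1), p i) = {x : ⟪x - p i, p i - p (i-1)⟫ ≥ 0}`. -/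
theorem isSelfApproachingPoly_iff_convexHull (m : ℕ)
    (p : ℕ → EuclideanSpace ℝ (Fin 2)) (hne : ∀ i < m, p i ≠ p (i + 1)) :
    IsSelfApproachingPoly m p ↔
      ∀ i : ℕ, 1 ≤ i → i ≤ m →
        convexHull ℝ (p '' {k | i ≤ k ∧ k ≤ m}) ⊆
          {x : EuclideanSpace ℝ (Fin 2) | 0 ≤ (inner ℝ (x - p i) (p i - p (i - 1)) : ℝ)} := by
  constructor
  · intro SA i hi1 him
    have hm1 : 1 ≤ m := le_trans hi1 him
    have hconv : Convex ℝ {x : EuclideanSpace ℝ (Fin 2) |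
        0 ≤ (inner ℝ (x - p i) (p i - p (i - 1)) : ℝ)} := by
      intro x hx y hy a b ha hb hab
      simp only [Set.mem_setOf_eq] at hx hy ⊢
      have hrep : a • x + b • y - p i
          = a • (x - p i) + b • (y - p i) + (a + b - 1) • p i := by module
      rw [hrep, hab]
      simp only [sub_self, zero_smul, add_zero, inner_add_left, real_inner_smul_left]
      nlinarith
    apply convexHull_min _ hconv
    rintro _ ⟨k, ⟨hik, hkm⟩, rfl⟩
    simp only [Set.mem_setOf_eq]
    -- realize p k as a path point strictly after (i-1, 1)
    obtain ⟨k', u', hk'm, hu', hpk, hple⟩ :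
        ∃ k' u', k' < m ∧ u' ∈ Set.Icc (0:ℝ) 1 ∧ polyPt p k' u' = p k ∧
          ParamLE (i-1) 1 k' u' := by
      rcases eq_or_lt_of_le hkm with rfl | hklt
      · refine ⟨k-1, 1, by omega, ⟨zero_le_one, le_refl 1⟩, ?_, ?_⟩
        · have h : k - 1 + 1 = k := by omega
          rw [polyPt_one', h]
        · rcases Nat.lt_or_ge (i-1) (k-1) with h | h
          · exact Or.inl h
          · exact Or.inr ⟨by omega, le_refl 1⟩
      · exact ⟨k, 0, hklt, ⟨le_refl 0, zero_le_one⟩, polyPt_zero' p k,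
          Or.inl (by omega)⟩
    have him' : i - 1 < m := by omega
    have hii : i - 1 + 1 = i := by omega
    -- distance from p i to p k is ≤ distance from any point of segment (i-1) to p k
    have hd : ∀ s, s ∈ Set.Icc (0:ℝ) 1 →
        dist (p i) (p k) ≤ dist (polyPt p (i-1) s) (p k) := by
      intro s hs
      have := SA (i-1) (i-1) k' s 1 u' him' him' hk'm hs ⟨zero_le_one, le_refl 1⟩ hu'
        (Or.inr ⟨rfl, hs.2⟩) hple
      rwa [polyPt_one', hii, hpk] at this
    -- translate to the inner product condition via a limiting argument
    set d : EuclideanSpace ℝ (Fin 2) := p (i-1) - p i with hd_def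
    set v : EuclideanSpace ℝ (Fin 2) := p i - p k with hv_def
    have hdd : d ≠ 0 := by
      have := hne (i-1) him'
      rw [hii] at this
      simpa [hd_def, sub_eq_zero] using this
    have hN : (0:ℝ) < ‖d‖^2 := pow_pos (norm_pos_iff.mpr hdd) 2
    have hkey : ∀ r : ℝ, 0 ≤ r → r ≤ 1 →
        0 ≤ 2 * r * (inner ℝ v d : ℝ) + r^2 * ‖d‖^2 := by
      intro r hr0 hr1
      have hs : 1 - r ∈ Set.Icc (0:ℝ) 1 := ⟨by linarith, by linarith⟩
      have hdist := hd (1-r) hs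
      have hrep : polyPt p (i-1) (1-r) - p k = v + r • d := by
        simp only [polyPt, hv_def, hd_def]
        have : p (i - 1 + 1) = p i := by rw [hii]
        rw [this]; module
      have hnorm : ‖p i - p k‖ ≤ ‖v + r • d‖ := by
        rw [← hrep, ← dist_eq_norm, ← dist_eq_norm]; exact hdist
      have hsq : ‖v‖^2 ≤ ‖v + r • d‖^2 := by
        have h0 : (0:ℝ) ≤ ‖p i - p k‖ := norm_nonneg _
        have : ‖v‖ ≤ ‖v + r • d‖ := by rw [hv_def]; exact hnorm
        nlinarith [norm_nonneg v]
      rw [norm_add_sq_real, real_inner_smul_right, norm_smul, Real.norm_eq_abs] at hsq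
      nlinarith [sq_abs r, sq_nonneg (|r| * ‖d‖)]
    have hgoal : 0 ≤ (inner ℝ v d : ℝ) := by
      by_contra hneg
      push_neg at hneg
      set x := (inner ℝ v d : ℝ)
      set r : ℝ := min 1 (-x / ‖d‖^2) with hr_def
      have hxpos : 0 < -x / ‖d‖^2 := div_pos (by linarith) hN
      have hr0 : 0 < r := lt_min one_pos hxpos
      have hr1 : r ≤ 1 := min_le_left _ _
      have hrx : r * ‖d‖^2 ≤ -x := by
        have : r ≤ -x / ‖d‖^2 := min_le_right _ _
        calc r * ‖d‖^2 ≤ (-x / ‖d‖^2) * ‖d‖^2 := by nlinarith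
          _ = -x := by field_simp
      have := hkey r (le_of_lt hr0) hr1
      nlinarith
    have hfin : (inner ℝ (p k - p i) (p i - p (i-1)) : ℝ) = (inner ℝ v d : ℝ) := by
      rw [hv_def, hd_def, ← inner_neg_neg]
      congr 1 <;> abel
    rw [hfin]
    exact hgoal
  · intro H i j k s t u hi hj hk hs ht hu h1 h2
    have hij : i ≤ j := by rcases h1 with h | ⟨h, _⟩ <;> omega
    exact chain m p H k u hk hu j hj i s t hij hs ht h1 h2
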